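/- Let V ⊆ ℝ² be open, B a real constant, and σ : V × ℝ × ℝ → ℝ (coordinates (x, y, v, u)) a twice continuously differentiable function satisfying, at every point, ∂σ/∂v = B·∂σ/∂u and −2σ·∂²σ/∂u² + (∂σ/∂u)² + 1/4 = 0. Then there exist continuous functions C, D : V → ℝ, with C nowhere vanishing, such that σ(x, y, v, u) = C(x,y)·(u + B·v + D(x,y))² + 1/(16·C(x,y)) for all (x, y, v, u) ∈ V × ℝ × ℝ. -/

import Mathlib

set_option maxHeartbeats 1000000

private lemma sigma_quad_aux (cq bq Cq t : ℝ) (hC : Cq ≠ 0)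
    (hr : 4 * cq * Cq = bq ^ 2 + 1 / 4) :
    cq + bq * t + Cq * t ^ 2 = Cq * (t + bq / (2 * Cq)) ^ 2 + 1 / (16 * Cq) := by
  field_simp
  linear_combination 16 * hr


/-- If a `C²` function `σ` on `V × ℝ × ℝ` (coordinates `(x, y, v, u)`) satisfies
`∂σ/∂v = B·∂σ/∂u` and `−2σ·∂²σ/∂u² + (∂σ/∂u)² + 1/4 = 0`, then
`σ = C(x,y)·(u + B·v + D(x,y))² + 1/(16·C(x,y))` for continuous functions `C ≠ 0` and `D`. -/
theorem sigma_normal_form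
    (V : Set (ℝ × ℝ)) (hV : IsOpen V) (B : ℝ)
    (σ : ℝ × ℝ × ℝ × ℝ → ℝ)
    (hσ : ContDiffOn ℝ 2 σ {p : ℝ × ℝ × ℝ × ℝ | (p.1, p.2.1) ∈ V})
    (hinv : ∀ p : ℝ × ℝ × ℝ × ℝ, (p.1, p.2.1) ∈ V →
      fderiv ℝ σ p ((0, 0, 1, 0) : ℝ × ℝ × ℝ × ℝ) =
        B * fderiv ℝ σ p ((0, 0, 0, 1) : ℝ × ℝ × ℝ × ℝ))
    (hode : ∀ p : ℝ × ℝ × ℝ × ℝ, (p.1, p.2.1) ∈ V →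
      -2 * σ p *
          fderiv ℝ (fun q => fderiv ℝ σ q ((0, 0, 0, 1) : ℝ × ℝ × ℝ × ℝ)) p
            ((0, 0, 0, 1) : ℝ × ℝ × ℝ × ℝ) +
        (fderiv ℝ σ p ((0, 0, 0, 1) : ℝ × ℝ × ℝ × ℝ)) ^ 2 + 1 / 4 = 0) :
    ∃ C D : ℝ × ℝ → ℝ, ContinuousOn C V ∧ ContinuousOn D V ∧
      (∀ q ∈ V, C q ≠ 0) ∧
      ∀ x y v u : ℝ, (x, y) ∈ V →
        σ (x, y, v, u) = C (x, y) * (u + B * v + D (x, y)) ^ 2 + 1 / (16 * C (x, y)) := by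
  classical
  set eu : ℝ × ℝ × ℝ × ℝ := (0, 0, 0, 1) with heu
  set S : Set (ℝ × ℝ × ℝ × ℝ) := {p : ℝ × ℝ × ℝ × ℝ | (p.1, p.2.1) ∈ V} with hSdef
  have hSopen : IsOpen S :=
    hV.preimage (continuous_fst.prodMk (continuous_fst.comp continuous_snd))
  -- differentiability facts
  have hdiff1 : ∀ p ∈ S, DifferentiableAt ℝ σ p := by
    intro p hp
    exact (hσ.contDiffAt (hSopen.mem_nhds hp)).differentiableAt (by norm_num)
  have hdiff2 : ∀ p ∈ S, DifferentiableAt ℝ (fun q => fderiv ℝ σ q eu) p := by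
    intro p hp
    have h2 : ContDiffAt ℝ 2 σ p := hσ.contDiffAt (hSopen.mem_nhds hp)
    have h1 : ContDiffAt ℝ 1 (fderiv ℝ σ) p := h2.fderiv_right (by norm_num)
    exact ((ContinuousLinearMap.apply ℝ ℝ eu).differentiable.differentiableAt).comp p
      (h1.differentiableAt (by norm_num))
  -- the basic data
  set b : ℝ × ℝ → ℝ := fun q => fderiv ℝ σ (q.1, q.2, 0, 0) eu with hbdef
  set c : ℝ × ℝ → ℝ := fun q => σ (q.1, q.2, 0, 0) with hcdef
  set C : ℝ × ℝ → ℝ := fun q => (b q ^ 2 + 1 / 4) / (4 * c q) with hCdef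
  set D : ℝ × ℝ → ℝ := fun q => b q / (2 * C q) with hDdef
  have hmemS : ∀ q : ℝ × ℝ, q ∈ V → ((q.1, q.2, (0:ℝ), (0:ℝ)) : ℝ × ℝ × ℝ × ℝ) ∈ S := by
    intro q hq; simpa [hSdef] using hq
  have hc0 : ∀ q ∈ V, c q ≠ 0 := by
    intro q hq hc
    have h := hode (q.1, q.2, 0, 0) hq
    rw [show σ (q.1, q.2, 0, 0) = c q from rfl, hc] at h
    nlinarith [sq_nonneg (b q)]
  have hC0 : ∀ q ∈ V, C q ≠ 0 := by
    intro q hq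
    exact div_ne_zero (by positivity) (by simpa using hc0 q hq)
  have hrel : ∀ q ∈ V, 4 * c q * C q = b q ^ 2 + 1 / 4 := by
    intro q hq
    have hcq := hc0 q hq
    rw [hCdef]
    field_simp
  -- the key pointwise formula
  have key : ∀ x y : ℝ, (x, y) ∈ V → ∀ t : ℝ,
      σ (x, y, 0, t) = c (x, y) + b (x, y) * t + C (x, y) * t ^ 2 := by
    intro x y hxy
    set e : ℝ → ℝ × ℝ × ℝ × ℝ := fun t => (x, y, 0, t) with hedef
    have heS : ∀ t, e t ∈ S := fun t => by simpa [hSdef, hedef] using hxy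
    have hee : ∀ t, HasDerivAt e eu t := by
      intro t
      exact (hasDerivAt_const t x).prodMk ((hasDerivAt_const t y).prodMk
        ((hasDerivAt_const t (0:ℝ)).prodMk (hasDerivAt_id t)))
    set h : ℝ → ℝ := fun t => σ (e t) with hhdef
    set h1 : ℝ → ℝ := fun t => fderiv ℝ σ (e t) eu with hh1def
    set h2 : ℝ → ℝ := fun t => fderiv ℝ (fun q => fderiv ℝ σ q eu) (e t) eu with hh2def
    have hh1 : ∀ t, HasDerivAt h (h1 t) t := by
      intro t
      exact (hdiff1 _ (heS t)).hasFDerivAt.comp_hasDerivAt t (hee t)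
    have hh2 : ∀ t, HasDerivAt h1 (h2 t) t := by
      intro t
      exact (hdiff2 _ (heS t)).hasFDerivAt.comp_hasDerivAt t (hee t)
    have hodet : ∀ t, -2 * h t * h2 t + h1 t ^ 2 + 1 / 4 = 0 := by
      intro t
      exact hode (e t) (heS t)
    have hhne : ∀ t, h t ≠ 0 := by
      intro t ht
      have := hodet t
      rw [ht] at this
      nlinarith [sq_nonneg (h1 t)]
    -- h2 is constant
    have hH : h2 = fun t => (h1 t ^ 2 + 1 / 4) / (2 * h t) := by
      funext t
      rw [eq_div_iff (by simpa using hhne t)]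
      linarith [hodet t]
    have hh2' : ∀ t, HasDerivAt h2 0 t := by
      intro t
      rw [hH]
      have hnum : HasDerivAt (fun s => h1 s ^ 2 + 1 / 4) (2 * h1 t * h2 t) t := by
        have := ((hh2 t).pow 2).add_const (1/4 : ℝ)
        simpa [mul_comm, mul_assoc, mul_left_comm] using this
      have hden : HasDerivAt (fun s => 2 * h s) (2 * h1 t) t := (hh1 t).const_mul 2
      have hd := hnum.div hden (by simpa using hhne t)
      refine hd.congr_deriv ?_
      rw [div_eq_zero_iff]
      left
      linear_combination (-2 * h1 t) * hodet t
    have hh2const : ∀ t, h2 t = h2 0 := by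
      intro t
      exact is_const_of_deriv_eq_zero (fun s => (hh2' s).differentiableAt)
        (fun s => (hh2' s).deriv) t 0
    set A : ℝ := h2 0 with hAdef
    -- h1 is affine
    have hh1aff : ∀ t, h1 t = h1 0 + A * t := by
      intro t
      have hg : ∀ s, HasDerivAt (fun r => h1 r - A * r) 0 s := by
        intro s
        have := (hh2 s).sub ((hasDerivAt_id s).const_mul A)
        simp only [hh2const s, mul_one, sub_self] at this
        exact this
      have := is_const_of_deriv_eq_zero (fun s => (hg s).differentiableAt)
        (fun s => (hg s).deriv) t 0
      simp at this
      linarith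
    -- h is quadratic
    have hhquad : ∀ t, h t = h 0 + h1 0 * t + A / 2 * t ^ 2 := by
      intro t
      have hg : ∀ s, HasDerivAt (fun r => h r - (h1 0 * r + A / 2 * r ^ 2)) 0 s := by
        intro s
        have h' : HasDerivAt (fun r => h1 0 * r + A / 2 * r ^ 2)
            (h1 0 + A / 2 * (2 * s)) s := by
          have p1 : HasDerivAt (fun r : ℝ => h1 0 * r) (h1 0 * 1) s :=
            (hasDerivAt_id s).const_mul (h1 0)
          have p2 : HasDerivAt (fun r : ℝ => A / 2 * r ^ 2) (A / 2 * (2 * s)) s := by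
            have := ((hasDerivAt_id s).pow 2).const_mul (A / 2)
            simpa [mul_comm, mul_assoc, mul_left_comm] using this
          have p12 := p1.add p2
          simp only [mul_one] at p12
          exact p12
        have := (hh1 s).sub h'
        have hval : h1 s - (h1 0 + A / 2 * (2 * s)) = 0 := by
          rw [hh1aff s]; ring
        rw [hval] at this
        exact this
      have := is_const_of_deriv_eq_zero (fun s => (hg s).differentiableAt)
        (fun s => (hg s).deriv) t 0
      simp at this
      linarith
    -- identify constants
    have hcv : c (x, y) = h 0 := rfl
    have hbv : b (x, y) = h1 0 := rfl
    have hCA : C (x, y) = A / 2 := by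
      have h0 := hodet 0
      have hne := hhne 0
      rw [hCdef]
      show (b (x, y) ^ 2 + 1 / 4) / (4 * c (x, y)) = A / 2
      rw [hcv, hbv, div_eq_iff (by simpa using hne)]
      rw [← hAdef] at h0
      linear_combination h0
    intro t
    have := hhquad t
    rw [hcv, hbv, hCA]
    calc σ (x, y, 0, t) = h t := rfl
      _ = h 0 + h1 0 * t + A / 2 * t ^ 2 := this
  -- translation in v
  have trans : ∀ x y v u : ℝ, (x, y) ∈ V → σ (x, y, v, u) = σ (x, y, 0, u + B * v) := by
    intro x y v u hxy
    set γ : ℝ → ℝ × ℝ × ℝ × ℝ := fun t => (x, y, t, u + B * v - B * t) with hγdef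
    have hγS : ∀ t, γ t ∈ S := fun t => by simpa [hSdef, hγdef] using hxy
    have hγd : ∀ t, HasDerivAt γ ((0, 0, 1, -B) : ℝ × ℝ × ℝ × ℝ) t := by
      intro t
      refine (hasDerivAt_const t x).prodMk ((hasDerivAt_const t y).prodMk
        ((hasDerivAt_id t).prodMk ?_))
      have := (hasDerivAt_const t (u + B * v)).sub ((hasDerivAt_id t).const_mul B)
      simp only [mul_one, zero_sub] at this
      exact this
    have hψ : ∀ t, HasDerivAt (fun t => σ (γ t)) 0 t := by
      intro t
      have := (hdiff1 _ (hγS t)).hasFDerivAt.comp_hasDerivAt t (hγd t)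
      have hval : fderiv ℝ σ (γ t) ((0, 0, 1, -B) : ℝ × ℝ × ℝ × ℝ) = 0 := by
        have hvec : ((0, 0, 1, -B) : ℝ × ℝ × ℝ × ℝ) =
            ((0, 0, 1, 0) : ℝ × ℝ × ℝ × ℝ) + (-B) • eu := by
          simp [heu, Prod.ext_iff]
        rw [hvec, map_add, map_smul]
        have := hinv (γ t) (hγS t)
        rw [this]
        simp
      rw [hval] at this
      exact this
    have hconst := is_const_of_deriv_eq_zero (fun s => (hψ s).differentiableAt)
      (fun s => (hψ s).deriv) v 0
    have e1 : γ v = (x, y, v, u) := by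
      rw [hγdef]; norm_num
    have e2 : γ 0 = (x, y, 0, u + B * v) := by
      rw [hγdef]; norm_num
    calc σ (x, y, v, u) = σ (γ v) := by rw [e1]
      _ = σ (γ 0) := hconst
      _ = σ (x, y, 0, u + B * v) := by rw [e2]
  -- continuity
  have hj : Continuous (fun q : ℝ × ℝ => ((q.1, q.2, 0, 0) : ℝ × ℝ × ℝ × ℝ)) :=
    continuous_fst.prodMk (continuous_snd.prodMk (continuous_const.prodMk continuous_const))
  have hjmaps : Set.MapsTo (fun q : ℝ × ℝ => ((q.1, q.2, 0, 0) : ℝ × ℝ × ℝ × ℝ)) V S := by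
    intro q hq; simpa [hSdef] using hq
  have hbC : ContinuousOn b V := by
    have hfd : ContinuousOn (fderiv ℝ σ) S :=
      hσ.continuousOn_fderiv_of_isOpen hSopen (by norm_num)
    have h1 : ContinuousOn (fun p => fderiv ℝ σ p eu) S :=
      (ContinuousLinearMap.apply ℝ ℝ eu).continuous.comp_continuousOn hfd
    exact h1.comp hj.continuousOn hjmaps
  have hcC : ContinuousOn c V := hσ.continuousOn.comp hj.continuousOn hjmaps
  have hCC : ContinuousOn C V := by
    refine (((hbC.pow 2).add continuousOn_const).div
      (continuousOn_const.mul hcC) ?_)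
    intro q hq
    simpa using hc0 q hq
  have hDC : ContinuousOn D V := by
    refine hbC.div (continuousOn_const.mul hCC) ?_
    intro q hq
    simpa using hC0 q hq
  refine ⟨C, D, hCC, hDC, hC0, ?_⟩
  intro x y v u hxy
  rw [trans x y v u hxy, key x y hxy (u + B * v)]
  have hC := hC0 (x, y) hxy
  have hc := hc0 (x, y) hxy
  have hr := hrel (x, y) hxy
  have halg := sigma_quad_aux (c (x, y)) (b (x, y)) (C (x, y)) (u + B * v) hC hr
  simp only [hDdef]
  exact halg
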